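/- Let τ_1, ..., τ_{n-1} be transpositions in S_n, and form the graph on vertex set {1,...,n} with an edge {a,b} for each transposition (ab) among them. Then the product τ_1 τ_2 ⋯ τ_{n-1} is an n-cycle if and only if this graph is a tree. -/

import Mathlib

set_option linter.unusedSectionVars false

open Equiv Equiv.Perm

variable {α : Type*} [Fintype α] [DecidableEq α]

lemma key_aux (π : Equiv.Perm α) {a b : α} (hab : ¬ π.SameCycle a b) :
    (π * Equiv.swap a b).SameCycle a (π a) := by
  have hab' : a ≠ b := fun h => hab (h ▸ Equiv.Perm.SameCycle.refl _ _)
  set τ := π * Equiv.swap a b with hτ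
  have hbs : ∀ k : ℕ, (π ^ k) b ≠ a := by
    intro k hk
    exact hab (Equiv.Perm.SameCycle.symm ⟨(k : ℤ), by simpa using hk⟩)
  have hex : ∃ m, 0 < m ∧ (π ^ m) b = b :=
    ⟨orderOf π, orderOf_pos π, by simp [pow_orderOf_eq_one]⟩
  classical
  set m := Nat.find hex with hm
  obtain ⟨hm0, hmb⟩ := Nat.find_spec hex
  have hmin : ∀ k, 0 < k → k < m → (π ^ k) b ≠ b := by
    intro k hk0 hkm hkb
    exact Nat.find_min hex hkm ⟨hk0, hkb⟩
  have hτapp : ∀ x, τ x = π (Equiv.swap a b x) := fun x => rfl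
  have claim : ∀ k, 1 ≤ k → k ≤ m → (τ ^ k) a = (π ^ k) b := by
    intro k
    induction k with
    | zero => omega
    | succ k ih =>
      intro _ hkm
      rcases Nat.eq_or_lt_of_le (Nat.one_le_iff_ne_zero.mpr (Nat.succ_ne_zero k)) with h1 | h1
      · -- k + 1 = 1
        have : k = 0 := by omega
        subst this
        simp [pow_one, hτapp, Equiv.swap_apply_left]
      · have hk1 : 1 ≤ k := by omega
        have hkm' : k ≤ m := by omega
        have ihk := ih hk1 hkm'
        have hne_a : (π ^ k) b ≠ a := hbs k
        have hne_b : (π ^ k) b ≠ b := hmin k (by omega) (by omega)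
        have : (τ ^ (k+1)) a = τ ((τ ^ k) a) := by
          rw [pow_succ', Equiv.Perm.mul_apply]
        rw [this, ihk, hτapp, Equiv.swap_apply_of_ne_of_ne hne_a hne_b,
          ← Equiv.Perm.mul_apply, ← pow_succ']
  have h1 : (τ ^ m) a = b := by rw [claim m hm0 le_rfl, hmb]
  have h2 : (τ ^ (m+1)) a = π a := by
    rw [pow_succ', Equiv.Perm.mul_apply, h1, hτapp, Equiv.swap_apply_right]
  exact ⟨((m+1 : ℕ) : ℤ), by rw [zpow_natCast]; exact h2⟩

lemma key (π : Equiv.Perm α) {a b : α} (hab : ¬ π.SameCycle a b) (x : α) :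
    (π * Equiv.swap a b).SameCycle x (π x) := by
  by_cases hxa : x = a
  · subst hxa; exact key_aux π hab
  by_cases hxb : x = b
  · subst hxb
    rw [Equiv.swap_comm]
    exact key_aux π (fun h => hab h.symm)
  · refine ⟨(1 : ℤ), ?_⟩
    simp [Equiv.Perm.mul_apply, Equiv.swap_apply_of_ne_of_ne hxa hxb]

lemma sc_pow (π : Equiv.Perm α) {a b : α} (hab : ¬ π.SameCycle a b) :
    ∀ (k : ℕ) (x : α), (π * Equiv.swap a b).SameCycle x ((π ^ k) x) := by
  intro k
  induction k with
  | zero => intro x; simpa using Equiv.Perm.SameCycle.refl (π * Equiv.swap a b) x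
  | succ k ih =>
    intro x
    have h1 := ih x
    have h2 := key π hab ((π ^ k) x)
    have : (π ^ (k+1)) x = π ((π ^ k) x) := by
      rw [pow_succ', Equiv.Perm.mul_apply]
    rw [this]
    exact h1.trans h2

lemma sc_mono (π : Equiv.Perm α) {a b : α} (hab : ¬ π.SameCycle a b) {x y : α}
    (h : π.SameCycle x y) : (π * Equiv.swap a b).SameCycle x y := by
  obtain ⟨k, -, hk⟩ := h.exists_pow_eq'
  exact hk ▸ sc_pow π hab k x

lemma sc_ab (π : Equiv.Perm α) {a b : α} (hab : ¬ π.SameCycle a b) :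
    (π * Equiv.swap a b).SameCycle a b := by
  have h1 : (π * Equiv.swap a b).SameCycle a (π b) :=
    ⟨(1 : ℤ), by simp [Equiv.Perm.mul_apply]⟩
  have h2 := key π hab b
  exact h1.trans h2.symm

lemma swap_eq_cases {x y a b : α} (hxy : x ≠ y)
    (h : Equiv.swap x y = Equiv.swap a b) : (x = a ∧ y = b) ∨ (x = b ∧ y = a) := by
  have hx : Equiv.swap a b x = y := by rw [← h, Equiv.swap_apply_left]
  by_cases hxa : x = a
  · subst hxa
    rw [Equiv.swap_apply_left] at hx
    exact Or.inl ⟨rfl, hx.symm⟩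
  · by_cases hxb : x = b
    · subst hxb
      rw [Equiv.swap_apply_right] at hx
      exact Or.inr ⟨rfl, hx.symm⟩
    · rw [Equiv.swap_apply_of_ne_of_ne hxa hxb] at hx
      exact absurd hx hxy

/-- The graph associated to a list of permutations (meant to be swaps). -/
def swGraph (l : List (Equiv.Perm α)) : SimpleGraph α :=
  SimpleGraph.fromRel (fun x y => Equiv.swap x y ∈ l)

lemma swGraph_adj {l : List (Equiv.Perm α)} {x y : α} :
    (swGraph l).Adj x y ↔ x ≠ y ∧ (Equiv.swap x y ∈ l ∨ Equiv.swap y x ∈ l) :=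
  SimpleGraph.fromRel_adj _ x y

lemma swGraph_mono {l l' : List (Equiv.Perm α)} (h : ∀ g ∈ l, g ∈ l') :
    swGraph l ≤ swGraph l' := by
  intro x y hxy
  rw [swGraph_adj] at hxy ⊢
  exact ⟨hxy.1, hxy.2.imp (h _) (h _)⟩

lemma reach_swap_apply {l : List (Equiv.Perm α)} {g : Equiv.Perm α} (hg : g ∈ l)
    (hs : g.IsSwap) (y : α) : (swGraph l).Reachable y (g y) := by
  obtain ⟨a, b, hab, rfl⟩ := hs
  by_cases hy : Equiv.swap a b y = y
  · rw [hy]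
  · have : y = a ∨ y = b := by
      by_contra hc
      push_neg at hc
      exact hy (Equiv.swap_apply_of_ne_of_ne hc.1 hc.2)
    have hadj : (swGraph l).Adj y (Equiv.swap a b y) := by
      rw [swGraph_adj]
      refine ⟨fun h => hy h.symm, ?_⟩
      rcases this with rfl | rfl
      · rw [Equiv.swap_apply_left]; exact Or.inl hg
      · right; rw [Equiv.swap_apply_right]; exact hg
    exact hadj.reachable

lemma reach_prod_apply (l : List (Equiv.Perm α)) (hl : ∀ g ∈ l, g.IsSwap) (x : α) :
    (swGraph l).Reachable x (l.prod x) := by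
  induction l with
  | nil =>
    simp only [List.prod_nil, Equiv.Perm.one_apply]
    exact SimpleGraph.Reachable.refl x
  | cons g t ih =>
    have h1 : (swGraph t) ≤ swGraph (g :: t) := swGraph_mono (fun h hh => List.mem_cons_of_mem _ hh)
    have h2 : (swGraph t).Reachable x (t.prod x) := ih (fun h hh => hl h (List.mem_cons_of_mem _ hh))
    have h3 : (swGraph (g :: t)).Reachable x (t.prod x) := h2.mono h1
    have h4 : (swGraph (g :: t)).Reachable (t.prod x) (g (t.prod x)) :=
      reach_swap_apply (List.mem_cons_self (a := g) (l := t)) (hl g (List.mem_cons_self (a := g) (l := t))) _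
    have : (g :: t).prod x = g (t.prod x) := by
      rw [List.prod_cons, Equiv.Perm.mul_apply]
    rw [this]
    exact h3.trans h4

lemma sc_to_reach (l : List (Equiv.Perm α)) (hl : ∀ g ∈ l, g.IsSwap) {x y : α}
    (h : l.prod.SameCycle x y) : (swGraph l).Reachable x y := by
  obtain ⟨k, -, hk⟩ := h.exists_pow_eq'
  subst hk
  clear h
  induction k with
  | zero =>
    simp only [pow_zero, Equiv.Perm.one_apply]
    exact SimpleGraph.Reachable.refl x
  | succ k ih =>
    have : (l.prod ^ (k+1)) x = l.prod ((l.prod ^ k) x) := by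
      rw [pow_succ', Equiv.Perm.mul_apply]
    rw [this]
    exact ih.trans (reach_prod_apply l hl _)

lemma main_lemma (l : List (Equiv.Perm α)) (hl : ∀ g ∈ l, g.IsSwap)
    (hforest : ∀ (l₁ l₂ : List (Equiv.Perm α)) (a b : α),
      l = l₁ ++ (Equiv.swap a b) :: l₂ → a ≠ b → ¬ (swGraph l₁).Reachable a b) :
    ∀ x y : α, (swGraph l).Reachable x y → (l.prod).SameCycle x y := by
  induction l using List.reverseRecOn with
  | nil =>
    intro x y ⟨w⟩
    cases w with
    | nil => exact Equiv.Perm.SameCycle.refl _ _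
    | cons h p =>
      rw [swGraph_adj] at h
      simp at h
  | append_singleton t g ih =>
    have hg : g.IsSwap := hl g (by simp)
    obtain ⟨a, b, hab, rfl⟩ := hg
    have hswaps : ∀ g' ∈ t, Equiv.Perm.IsSwap g' := fun g' hg' => hl g' (by simp [hg'])
    have hnr : ¬ (swGraph t).Reachable a b := hforest t [] a b (by simp) hab
    have hnsc : ¬ (t.prod).SameCycle a b := fun h => hnr (sc_to_reach t hswaps h)
    have hprod : (t ++ [Equiv.swap a b]).prod = t.prod * Equiv.swap a b := by
      rw [List.prod_append, List.prod_singleton]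
    have iht : ∀ x y : α, (swGraph t).Reachable x y → (t.prod).SameCycle x y := by
      refine ih hswaps ?_
      intro l₁ l₂ c d heq hcd
      exact hforest l₁ (l₂ ++ [Equiv.swap a b]) c d (by rw [heq]; simp) hcd
    -- adjacency case
    have hadj : ∀ x y : α, (swGraph (t ++ [Equiv.swap a b])).Adj x y →
        ((t ++ [Equiv.swap a b]).prod).SameCycle x y := by
      intro x y h
      rw [swGraph_adj] at h
      obtain ⟨hxy, hmem⟩ := h
      rw [hprod]
      rcases hmem with hm | hm <;> rw [List.mem_append, List.mem_singleton] at hm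
      · rcases hm with hm | hm
        · exact sc_mono t.prod hnsc (iht x y ((swGraph_adj.mpr ⟨hxy, Or.inl hm⟩ :
            (swGraph t).Adj x y)).reachable)
        · rcases swap_eq_cases hxy hm with ⟨rfl, rfl⟩ | ⟨rfl, rfl⟩
          · exact sc_ab t.prod hnsc
          · exact (sc_ab t.prod hnsc).symm
      · rcases hm with hm | hm
        · exact sc_mono t.prod hnsc (iht x y ((swGraph_adj.mpr ⟨hxy, Or.inr hm⟩ :
            (swGraph t).Adj x y)).reachable)
        · rcases swap_eq_cases (Ne.symm hxy) hm with ⟨rfl, rfl⟩ | ⟨rfl, rfl⟩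
          · exact (sc_ab t.prod hnsc).symm
          · exact sc_ab t.prod hnsc
    intro x y ⟨w⟩
    induction w with
    | nil => exact Equiv.Perm.SameCycle.refl _ _
    | @cons u v z h p ihw => exact (hadj u v h).trans ihw

section GraphCount

open SimpleGraph

variable {V : Type*} [Fintype V] [DecidableEq V]

/-- A connected graph on `n` vertices has at least `n - 1` edges. -/
lemma conn_card_le {G : SimpleGraph V} [Fintype G.edgeSet] (h : G.Connected) :
    Fintype.card V ≤ G.edgeFinset.card + 1 := by
  classical
  obtain ⟨r⟩ := h.nonempty
  have hall := fun v => (h.exists_walk_length_eq_dist v r)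
  choose p hp using hall
  have hnil : ∀ v, v ≠ r → ¬ (p v).Nil := fun v hv => SimpleGraph.Walk.not_nil_of_ne hv
  have hdist : ∀ v, v ≠ r → G.dist ((p v).getVert 1) r < G.dist v r := by
    intro v hv
    have h1 : G.dist ((p v).getVert 1) r ≤ (p v).tail.length := SimpleGraph.dist_le _
    have h2 : (p v).tail.length + 1 = (p v).length := Walk.length_tail_add_one (hnil v hv)
    have h3 : 0 < G.dist v r := h.pos_dist_of_ne hv
    rw [hp v] at h2
    omega
  have hmem : ∀ v ∈ Finset.univ.erase r, s(v, (p v).getVert 1) ∈ G.edgeFinset := by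
    intro v hv
    rw [SimpleGraph.mem_edgeFinset, SimpleGraph.mem_edgeSet]
    exact (p v).adj_snd (hnil v (Finset.ne_of_mem_erase hv))
  have hinj : Set.InjOn (fun v => s(v, (p v).getVert 1)) (Finset.univ.erase r) := by
    intro u hu v hv huv
    simp only [Sym2.eq, Sym2.rel_iff', Prod.mk.injEq, Prod.swap_prod_mk] at huv
    rcases huv with ⟨h1, -⟩ | ⟨h1, h2⟩
    · exact h1
    · exfalso
      have hu' := hdist u (by simpa using hu)
      have hv' := hdist v (by simpa using hv)
      rw [h2] at hu'
      rw [← h1] at hv'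
      omega
  have hcard := Finset.card_le_card_of_injOn _ hmem hinj
  rw [Finset.card_erase_of_mem (Finset.mem_univ r), Finset.card_univ] at hcard
  omega

lemma reach_del {G : SimpleGraph V} {x y : V}
    (hxy : (G \ SimpleGraph.fromEdgeSet {s(x,y)}).Reachable x y) {u w : V}
    (h : G.Reachable u w) : (G \ SimpleGraph.fromEdgeSet {s(x,y)}).Reachable u w := by
  obtain ⟨p⟩ := h
  induction p with
  | nil => exact SimpleGraph.Reachable.refl _
  | @cons u v z hadj p ih =>
    refine SimpleGraph.Reachable.trans ?_ ih
    by_cases he : s(u, v) = s(x, y)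
    · rw [Sym2.eq_iff] at he
      rcases he with ⟨rfl, rfl⟩ | ⟨rfl, rfl⟩
      · exact hxy
      · exact hxy.symm
    · refine SimpleGraph.Adj.reachable ?_
      rw [SimpleGraph.sdiff_adj]
      refine ⟨hadj, ?_⟩
      rw [SimpleGraph.fromEdgeSet_adj]
      rintro ⟨hmem, -⟩
      exact he hmem

lemma tree_of_conn_card {G : SimpleGraph V} [Fintype G.edgeSet] (hc : G.Connected)
    (hcard : G.edgeFinset.card + 1 ≤ Fintype.card V) : G.IsTree := by
  classical
  refine ⟨hc, ?_⟩
  rw [SimpleGraph.isAcyclic_iff_forall_adj_isBridge]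
  by_contra hb
  push_neg at hb
  obtain ⟨x, y, hadj, hnb⟩ := hb
  have hreach : (G \ SimpleGraph.fromEdgeSet {s(x,y)}).Reachable x y := by
    by_contra hR
    exact hnb hR
  set G' := G \ SimpleGraph.fromEdgeSet {s(x,y)} with hG'
  have hc' : G'.Connected := by
    haveI := hc.nonempty
    exact SimpleGraph.Connected.mk (fun u w => reach_del hreach (hc u w))
  letI : Fintype ↑G'.edgeSet := Fintype.ofFinite _
  have hes : G'.edgeSet = G.edgeSet \ {s(x,y)} := by
    rw [hG', SimpleGraph.edgeSet_sdiff, SimpleGraph.edgeSet_fromEdgeSet,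
      SimpleGraph.edgeSet_sdiff_sdiff_isDiag]
  have hef : G'.edgeFinset = G.edgeFinset.erase s(x,y) := by
    ext e
    rw [SimpleGraph.mem_edgeFinset, hes, Finset.mem_erase, SimpleGraph.mem_edgeFinset]
    simp [and_comm]
  have hxy_mem : s(x,y) ∈ G.edgeFinset := by
    rw [SimpleGraph.mem_edgeFinset, SimpleGraph.mem_edgeSet]; exact hadj
  have hcard' := conn_card_le hc'
  rw [hef, Finset.card_erase_of_mem hxy_mem] at hcard'
  have hpos : 0 < G.edgeFinset.card := Finset.card_pos.mpr ⟨_, hxy_mem⟩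
  omega

end GraphCount

/-- The product of `n-1` transpositions in `S_n` is an `n`-cycle iff the associated
graph on `{1,…,n}` (an edge `{a,b}` for each transposition `(a b)`) is a tree. -/
theorem product_of_transpositions_isCycle_iff_tree
    (n : ℕ) (hn : 2 ≤ n) (τ : Fin (n - 1) → Equiv.Perm (Fin n))
    (hτ : ∀ i, (τ i).IsSwap) :
    ((List.ofFn τ).prod.IsCycle ∧ (List.ofFn τ).prod.support.card = n) ↔
      (SimpleGraph.fromRel
        (fun a b : Fin n => ∃ i, τ i = Equiv.swap a b)).IsTree := by
  classical
  set σ := (List.ofFn τ).prod with hσ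
  set G := SimpleGraph.fromRel (fun a b : Fin n => ∃ i, τ i = Equiv.swap a b) with hG
  set l := List.ofFn τ with hl
  letI : Fintype ↑G.edgeSet := Fintype.ofFinite _
  have hswaps : ∀ g ∈ l, Equiv.Perm.IsSwap g := by
    intro g hg
    rw [hl, List.mem_ofFn] at hg
    obtain ⟨i, rfl⟩ := hg
    exact hτ i
  have hGl : G = swGraph l := by
    rw [hG]
    ext x y
    rw [SimpleGraph.fromRel_adj, swGraph_adj]
    simp only [hl, List.mem_ofFn, Set.mem_range]
  choose u v huv hswap using hτ
  set E : Fin (n-1) → Sym2 (Fin n) := fun i => s(u i, v i) with hE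
  have hsub : G.edgeFinset ⊆ Finset.image E Finset.univ := by
    intro e he
    induction e using Sym2.ind with
    | _ x y =>
      rw [SimpleGraph.mem_edgeFinset, SimpleGraph.mem_edgeSet, hG,
        SimpleGraph.fromRel_adj] at he
      obtain ⟨hne, h | h⟩ := he
      all_goals {
        obtain ⟨i, hi⟩ := h
        rw [hswap i] at hi
        rw [Finset.mem_image]
        refine ⟨i, Finset.mem_univ i, ?_⟩
        rcases swap_eq_cases (huv i) hi with ⟨h1, h2⟩ | ⟨h1, h2⟩ <;>
          simp only [hE, h1, h2] <;>
          first | rfl | exact Sym2.eq_swap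
      }
  have hEmem : ∀ i, E i ∈ G.edgeFinset := by
    intro i
    rw [SimpleGraph.mem_edgeFinset, SimpleGraph.mem_edgeSet, hG, SimpleGraph.fromRel_adj]
    exact ⟨huv i, Or.inl ⟨i, hswap i⟩⟩
  have hcard_le : G.edgeFinset.card ≤ n - 1 := by
    calc G.edgeFinset.card ≤ (Finset.image E Finset.univ).card := Finset.card_le_card hsub
    _ ≤ Finset.univ.card := Finset.card_image_le
    _ = n - 1 := by rw [Finset.card_univ, Fintype.card_fin]
  constructor
  · -- cycle → tree
    rintro ⟨hcyc, hsupp⟩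
    have hsuppuniv : σ.support = Finset.univ := by
      apply Finset.eq_univ_of_card
      rw [Fintype.card_fin]
      exact hsupp
    have hmove : ∀ x, σ x ≠ x := by
      intro x
      rw [← Equiv.Perm.mem_support, hsuppuniv]
      exact Finset.mem_univ x
    have hreach : ∀ x y : Fin n, G.Reachable x y := by
      intro x y
      rw [hGl]
      exact sc_to_reach l hswaps (hcyc.sameCycle (hmove x) (hmove y))
    have hconn : G.Connected := by
      haveI : Nonempty (Fin n) := ⟨⟨0, by omega⟩⟩
      exact SimpleGraph.Connected.mk hreach
    refine tree_of_conn_card hconn ?_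
    rw [Fintype.card_fin]
    omega
  · -- tree → cycle
    intro hT
    have hecard := hT.card_edgeFinset
    rw [Fintype.card_fin] at hecard
    have himg : Finset.image E Finset.univ = G.edgeFinset := by
      refine Finset.Subset.antisymm ?_ hsub
      intro e he
      rw [Finset.mem_image] at he
      obtain ⟨i, -, rfl⟩ := he
      exact hEmem i
    have hEinj : Function.Injective E := by
      have h1 : (Finset.image E Finset.univ).card = (Finset.univ : Finset (Fin (n-1))).card := by
        rw [himg, Finset.card_univ, Fintype.card_fin]
        omega
      have h2 := Finset.injOn_of_card_image_eq h1
      exact fun i j hij => h2 (Finset.mem_coe.mpr (Finset.mem_univ i))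
        (Finset.mem_coe.mpr (Finset.mem_univ j)) hij
    have hτinj : Function.Injective τ := by
      intro i j hij
      apply hEinj
      have hsw : Equiv.swap (u i) (v i) = Equiv.swap (u j) (v j) := by
        rw [← hswap i, ← hswap j, hij]
      rcases swap_eq_cases (huv i) hsw with ⟨h1, h2⟩ | ⟨h1, h2⟩ <;>
        simp only [hE, h1, h2]
      exact Sym2.eq_swap
    have hnodup : l.Nodup := by
      rw [hl]
      exact List.nodup_ofFn.mpr hτinj
    have hforest : ∀ (l₁ l₂ : List (Equiv.Perm (Fin n))) (a b : Fin n),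
        l = l₁ ++ (Equiv.swap a b) :: l₂ → a ≠ b → ¬ (swGraph l₁).Reachable a b := by
      intro l₁ l₂ a b heq hab hreach
      have hmem_ab : Equiv.swap a b ∈ l := by rw [heq]; simp
      have hnot_l₁ : Equiv.swap a b ∉ l₁ := by
        rw [heq] at hnodup
        rw [List.nodup_append] at hnodup
        intro hmem
        exact hnodup.2.2 _ hmem _ List.mem_cons_self rfl
      have hadjab : G.Adj a b := by
        rw [hG, SimpleGraph.fromRel_adj]
        refine ⟨hab, Or.inl ?_⟩
        rw [hl, List.mem_ofFn] at hmem_ab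
        obtain ⟨i, hi⟩ := hmem_ab
        exact ⟨i, hi⟩
      have hbridge : G.IsBridge s(a, b) :=
        SimpleGraph.isAcyclic_iff_forall_adj_isBridge.mp hT.IsAcyclic hadjab
      rw [SimpleGraph.isBridge_iff] at hbridge
      refine hbridge (SimpleGraph.Reachable.mono ?_ hreach)
      intro x y hxy
      rw [swGraph_adj] at hxy
      obtain ⟨hne, hm⟩ := hxy
      have hGadj : G.Adj x y := by
        rw [hG, SimpleGraph.fromRel_adj]
        refine ⟨hne, ?_⟩
        have hsubl : ∀ g : Equiv.Perm (Fin n), g ∈ l₁ → ∃ i, τ i = g := by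
          intro g hg
          have hgl : g ∈ l := by rw [heq]; exact List.mem_append_left _ hg
          rw [hl, List.mem_ofFn] at hgl
          obtain ⟨i, hi⟩ := hgl
          exact ⟨i, hi⟩
        rcases hm with hm | hm
        · exact Or.inl (hsubl _ hm)
        · exact Or.inr (hsubl _ hm)
      have hne_e : s(x, y) ≠ s(a, b) := by
        intro hsame
        rw [Sym2.eq_iff] at hsame
        have : Equiv.swap a b ∈ l₁ := by
          rcases hm with hm | hm <;> rcases hsame with ⟨rfl, rfl⟩ | ⟨rfl, rfl⟩ <;>
            first
              | exact hm
              | (rw [Equiv.swap_comm]; exact hm)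
        exact hnot_l₁ this
      rw [SimpleGraph.deleteEdges_adj]
      exact ⟨hGadj, fun h => hne_e h⟩
    have hall := main_lemma l hswaps hforest
    have hsc : ∀ x y : Fin n, σ.SameCycle x y := by
      intro x y
      exact hall x y (by rw [← hGl]; exact hT.isConnected x y)
    have hmove : ∀ x, σ x ≠ x := by
      intro x hfix
      obtain ⟨y, hy⟩ := Fintype.exists_ne_of_one_lt_card (by rw [Fintype.card_fin]; omega) x
      obtain ⟨k, -, hk⟩ := (hsc x y).exists_pow_eq'
      have hfixk : ∀ m : ℕ, (σ ^ m) x = x := by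
        intro m
        induction m with
        | zero => simp
        | succ m ih => rw [pow_succ', Equiv.Perm.mul_apply, ih, hfix]
      rw [hfixk k] at hk
      exact hy hk.symm
    refine ⟨⟨⟨0, by omega⟩, hmove _, fun y hy => hsc _ y⟩, ?_⟩
    have : σ.support = Finset.univ := by
      apply Finset.eq_univ_of_forall
      intro x
      rw [Equiv.Perm.mem_support]
      exact hmove x
    rw [this, Finset.card_univ, Fintype.card_fin]
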